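/- Let f : ℝ → ℝ be a continuous monotone (order preserving) map and let μ be a Borel probability measure on ℝ that is invariant and ergodic for f. Then μ is a Dirac measure: there exists m ∈ ℝ such that μ = δ_m. -/

import Mathlib

open MeasureTheory Filter

/-- If almost every orbit eventually stays in a measurable set `S`, then an invariant
probability measure gives `S` full measure. -/
lemma key_full_measure (f : ℝ → ℝ) (hf : Measurable f) (μ : Measure ℝ)
    [IsProbabilityMeasure μ] (hinv : μ.map f = μ)
    (S : Set ℝ) (hS : MeasurableSet S)
    (h : ∀ᵐ x ∂μ, ∀ᶠ n in atTop, f^[n] x ∈ S) : μ S = 1 := by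
  have hmp : MeasurePreserving f μ μ := ⟨hf, hinv⟩
  set E : ℕ → Set ℝ := fun N => ⋂ n, ⋂ (_ : N ≤ n), f^[n] ⁻¹' S with hE
  have hEmeas : ∀ N, MeasurableSet (E N) := fun N =>
    MeasurableSet.iInter fun n => MeasurableSet.iInter fun _ => (hf.iterate n) hS
  have hmono : Monotone E := by
    intro N M hNM x hx
    simp only [hE, Set.mem_iInter] at hx ⊢
    exact fun n hn => hx n (hNM.trans hn)
  have hunion : {x | ∀ᶠ n in atTop, f^[n] x ∈ S} = ⋃ N, E N := by
    ext x
    simp [hE, eventually_atTop, Set.mem_iUnion, Set.mem_iInter]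
  have hmeasset : MeasurableSet {x | ∀ᶠ n in atTop, f^[n] x ∈ S} := by
    rw [hunion]; exact MeasurableSet.iUnion hEmeas
  have h1 : μ (⋃ N, E N) = 1 := by
    rw [← hunion, ← mem_ae_iff_prob_eq_one hmeasset]
    exact h
  have hle : ∀ N, μ (E N) ≤ μ S := by
    intro N
    have hsub : E N ⊆ f^[N] ⁻¹' S := by
      intro x hx
      simp only [hE, Set.mem_iInter] at hx
      exact hx N le_rfl
    calc μ (E N) ≤ μ (f^[N] ⁻¹' S) := measure_mono hsub
      _ = μ S := (hmp.iterate N).measure_preimage hS.nullMeasurableSet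
  have htend := tendsto_measure_iUnion_atTop (μ := μ) hmono
  rw [h1] at htend
  exact le_antisymm prob_le_one (le_of_tendsto htend (Eventually.of_forall hle))

/-- A deterministic version of Proposition 2: an ergodic invariant Borel probability
measure of a continuous monotone map `f : ℝ → ℝ` is a Dirac measure. -/
theorem stmt_9 (f : ℝ → ℝ) (hc : Continuous f) (hm : Monotone f)
    (μ : Measure ℝ) [IsProbabilityMeasure μ]
    (hinv : μ.map f = μ)
    (herg : ∀ A : Set ℝ, MeasurableSet A → f ⁻¹' A = A → μ A = 0 ∨ μ A = 1) :
    ∃ m : ℝ, μ = Measure.dirac m := by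
  have hf : Measurable f := hc.measurable
  -- the sets A t of points whose orbit is eventually ≤ t
  set A : ℝ → Set ℝ := fun t => {x | ∀ᶠ n in atTop, f^[n] x ≤ t} with hA
  have hAeq : ∀ t, A t = ⋃ N, ⋂ n, ⋂ (_ : N ≤ n), f^[n] ⁻¹' Set.Iic t := by
    intro t; ext x
    simp [hA, eventually_atTop, Set.mem_iUnion, Set.mem_iInter]
  have hAmeas : ∀ t, MeasurableSet (A t) := by
    intro t
    rw [hAeq]
    exact MeasurableSet.iUnion fun N => MeasurableSet.iInter fun n =>
      MeasurableSet.iInter fun _ => (hf.iterate n) measurableSet_Iic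
  have hAinv : ∀ t, f ⁻¹' A t = A t := by
    intro t; ext x
    simp only [hA, Set.mem_preimage, Set.mem_setOf_eq, eventually_atTop]
    constructor
    · rintro ⟨N, hN⟩
      refine ⟨N + 1, fun n hn => ?_⟩
      have := hN (n - 1) (by omega)
      rwa [← Function.iterate_succ_apply, Nat.succ_eq_add_one,
        Nat.sub_add_cancel (by omega)] at this
    · rintro ⟨N, hN⟩
      refine ⟨N, fun n hn => ?_⟩
      rw [← Function.iterate_succ_apply f n x]
      exact hN (n + 1) (by omega)
  have hAsub : ∀ s t : ℝ, s ≤ t → A s ⊆ A t := by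
    intro s t hst x hx
    exact hx.mono fun n hn => hn.trans hst
  -- monotone orbits: frequently above c means eventually above c
  have horb : ∀ (x c : ℝ), (∃ᶠ n in atTop, c < f^[n] x) → ∀ᶠ n in atTop, c < f^[n] x := by
    intro x c hfreq
    rcases le_total x (f x) with hx | hx
    · have hmono := hm.monotone_iterate_of_le_map hx
      obtain ⟨n₀, hn₀⟩ := hfreq.exists
      exact eventually_atTop.2 ⟨n₀, fun n hn => lt_of_lt_of_le hn₀ (hmono hn)⟩
    · have hanti := hm.antitone_iterate_of_map_le hx
      refine Eventually.of_forall fun n => ?_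
      obtain ⟨n', hn', h'⟩ := (frequently_atTop.1 hfreq) n
      exact lt_of_lt_of_le h' (hanti hn')
  -- from μ (A t) = 0 : a.e. orbit eventually above t
  have hzero : ∀ t : ℝ, μ (A t) = 0 → ∀ᵐ x ∂μ, ∀ᶠ n in atTop, t < f^[n] x := by
    intro t ht
    have : ∀ᵐ x ∂μ, x ∉ A t := by
      rw [ae_iff]
      simpa using ht
    filter_upwards [this] with x hx
    apply horb
    simp only [hA, Set.mem_setOf_eq] at hx
    rw [Filter.not_eventually] at hx
    exact hx.mono fun n hn => not_le.1 hn
  have hone : ∀ t : ℝ, μ (A t) = 1 → ∀ᵐ x ∂μ, ∀ᶠ n in atTop, f^[n] x ≤ t := by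
    intro t ht
    exact (mem_ae_iff_prob_eq_one (hAmeas t)).2 ht
  -- there is t₀ with μ (Iic t₀) > 0
  have ht₀ : ∃ t₀ : ℝ, 0 < μ (Set.Iic t₀) := by
    by_contra hcon
    push_neg at hcon
    have hall : ∀ n : ℕ, μ (Set.Iic (n : ℝ)) = 0 := fun n =>
      le_antisymm (hcon n) zero_le
    have : μ (⋃ n : ℕ, Set.Iic (n : ℝ)) = 0 := measure_iUnion_null hall
    have huniv : (⋃ n : ℕ, Set.Iic (n : ℝ)) = Set.univ := by
      ext x
      simp only [Set.mem_iUnion, Set.mem_Iic, Set.mem_univ, iff_true]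
      obtain ⟨n, hn⟩ := exists_nat_ge x
      exact ⟨n, hn⟩
    rw [huniv, measure_univ] at this
    exact one_ne_zero this
  obtain ⟨t₀, ht₀⟩ := ht₀
  -- there is t₁ with μ (Ici t₁) > 0
  have ht₁ : ∃ t₁ : ℝ, 0 < μ (Set.Ici t₁) := by
    by_contra hcon
    push_neg at hcon
    have hall : ∀ n : ℕ, μ (Set.Ici (-(n : ℝ))) = 0 := fun n =>
      le_antisymm (hcon _) zero_le
    have : μ (⋃ n : ℕ, Set.Ici (-(n : ℝ))) = 0 := measure_iUnion_null hall
    have huniv : (⋃ n : ℕ, Set.Ici (-(n : ℝ))) = Set.univ := by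
      ext x
      simp only [Set.mem_iUnion, Set.mem_Ici, Set.mem_univ, iff_true]
      obtain ⟨n, hn⟩ := exists_nat_ge (-x)
      exact ⟨n, by linarith⟩
    rw [huniv, measure_univ] at this
    exact one_ne_zero this
  obtain ⟨t₁, ht₁⟩ := ht₁
  set T : Set ℝ := {t | μ (A t) = 1} with hT
  -- t₀ ∈ T
  have ht₀T : t₀ ∈ T := by
    rcases herg (A t₀) (hAmeas t₀) (hAinv t₀) with h0 | h1
    · exfalso
      have hae := hzero t₀ h0
      have : μ (Set.Ioi t₀) = 1 := by
        apply key_full_measure f hf μ hinv _ measurableSet_Ioi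
        filter_upwards [hae] with x hx using hx
      have hIic : μ (Set.Iic t₀) = 0 := by
        have := (prob_compl_eq_zero_iff (μ := μ) measurableSet_Ioi).2 this
        rwa [Set.compl_Ioi] at this
      rw [hIic] at ht₀
      exact lt_irrefl 0 ht₀
    · exact h1
  -- T is bounded below by t₁
  have hTlb : ∀ t ∈ T, t₁ ≤ t := by
    intro t ht
    by_contra hcon
    push_neg at hcon
    have hae := hone t ht
    have : μ (Set.Iio t₁) = 1 := by
      apply key_full_measure f hf μ hinv _ measurableSet_Iio
      filter_upwards [hae] with x hx
      exact hx.mono fun n hn => lt_of_le_of_lt hn hcon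
    have hIci : μ (Set.Ici t₁) = 0 := by
      have := (prob_compl_eq_zero_iff (μ := μ) measurableSet_Iio).2 this
      rwa [Set.compl_Iio] at this
    rw [hIci] at ht₁
    exact lt_irrefl 0 ht₁
  have hTne : T.Nonempty := ⟨t₀, ht₀T⟩
  have hTbdd : BddBelow T := ⟨t₁, fun t ht => hTlb t ht⟩
  set m : ℝ := sInf T with hmdef
  -- for every ε > 0, μ (Ioo (m - ε) (m + ε)) = 1
  have hIoo : ∀ ε : ℝ, 0 < ε → μ (Set.Ioo (m - ε) (m + ε)) = 1 := by
    intro ε hε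
    obtain ⟨t, htT, htlt⟩ : ∃ t ∈ T, t < m + ε := by
      have : sInf T < m + ε := by rw [← hmdef]; linarith
      exact (csInf_lt_iff hTbdd hTne).1 this
    have hlow : μ (A (m - ε)) = 0 := by
      rcases herg (A (m - ε)) (hAmeas _) (hAinv _) with h0 | h1
      · exact h0
      · exfalso
        have : m ≤ m - ε := csInf_le hTbdd h1
        linarith
    have haeup := hone t htT
    have haelow := hzero _ hlow
    apply key_full_measure f hf μ hinv _ measurableSet_Ioo
    filter_upwards [haeup, haelow] with x hx1 hx2
    filter_upwards [hx1, hx2] with n hn1 hn2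
    exact ⟨hn2, lt_of_le_of_lt hn1 htlt⟩
  -- μ {m} = 1
  have hμm : μ ({m} : Set ℝ) = 1 := by
    have hae : ∀ᵐ x ∂μ, ∀ k : ℕ,
        x ∈ Set.Ioo (m - 1 / (k + 1)) (m + 1 / (k + 1)) := by
      rw [ae_all_iff]
      intro k
      have hpos : (0 : ℝ) < 1 / (k + 1) := by positivity
      exact (mem_ae_iff_prob_eq_one measurableSet_Ioo).2 (hIoo _ hpos)
    have : ∀ᵐ x ∂μ, x ∈ ({m} : Set ℝ) := by
      filter_upwards [hae] with x hx
      simp only [Set.mem_singleton_iff]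
      by_contra hne
      have habs : 0 < |x - m| := by
        rw [abs_pos, sub_ne_zero]; exact hne
      obtain ⟨k, hk⟩ := exists_nat_one_div_lt habs
      obtain ⟨h1, h2⟩ := hx k
      have : |x - m| < 1 / (k + 1) := abs_sub_lt_iff.2 ⟨by linarith, by linarith⟩
      linarith
    exact (mem_ae_iff_prob_eq_one (measurableSet_singleton m)).1 this
  refine ⟨m, ?_⟩
  ext s hs
  rw [Measure.dirac_apply' m hs]
  by_cases hms : m ∈ s
  · rw [Set.indicator_of_mem hms]
    refine le_antisymm prob_le_one ?_
    calc (1 : ENNReal) = μ {m} := hμm.symm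
      _ ≤ μ s := measure_mono (Set.singleton_subset_iff.2 hms)
  · rw [Set.indicator_of_notMem hms]
    have : μ ({m}ᶜ) = 0 :=
      (prob_compl_eq_zero_iff (measurableSet_singleton m)).2 hμm
    exact le_antisymm (le_trans (measure_mono (by
      intro x hx
      simp only [Set.mem_compl_iff, Set.mem_singleton_iff]
      rintro rfl
      exact hms hx)) this.le) zero_le
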